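/- Let Q be a finite set of primes, p a natural number not divisible by any q ∈ Q, and for each q ∈ Q fix c_q ∈ {1,...,q−1}. Let (d₁,...,d_l) be a strictly increasing sequence of positive integers such that for every prime q the classes 0, d₁,...,d_l do not cover ℤ/qℤ, let a ∈ ℤ and n > 1. Then there exist infinitely many k ∈ ℕ such that for every q ∈ Q and every i ∈ {0,1,...,l} (with d₀ = 0), q does not divide c_q^n + k·p·c_q + a + dᵢ. -/

import Mathlib

theorem many_good_k (Q : Finset ℕ) (hQ : ∀ q ∈ Q, q.Prime)
    (p : ℕ) (hp : ∀ q ∈ Q, ¬ q ∣ p)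
    (c : ℕ → ℕ) (hc : ∀ q ∈ Q, 1 ≤ c q ∧ c q ≤ q - 1)
    (l : ℕ) (d : Fin (l + 1) → ℕ) (hd0 : d 0 = 0) (hmono : StrictMono d)
    (hadm : ∀ q : ℕ, q.Prime → ∃ e : ZMod q, ∀ i, e ≠ (d i : ZMod q))
    (a : ℤ) (n : ℕ) (hn : 1 < n) :
    {k : ℕ | ∀ q ∈ Q, ∀ i : Fin (l + 1),
      ¬ (q : ℤ) ∣ (c q : ℤ) ^ n + (k : ℤ) * p * (c q) + a + d i}.Infinite := by
  classical
  choose e he using hadm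
  -- target residues
  set w : ℕ → ℕ := fun q =>
    if hq : q ∈ Q then
      (((p : ZMod q) * (c q : ZMod q))⁻¹ *
        (-(e q (hQ q hq)) - (c q : ZMod q) ^ n - (a : ZMod q))).val
    else 0 with hw
  have hs : ∀ q ∈ Q, (id q : ℕ) ≠ 0 := fun q hq => (hQ q hq).pos.ne'
  have pp : Set.Pairwise (↑Q) (Function.onFun Nat.Coprime id) := by
    intro q hq q' hq' hne
    exact (Nat.coprime_primes (hQ q hq) (hQ q' hq')).2 hne
  obtain ⟨k₀, hk₀⟩ := Nat.chineseRemainderOfFinset w id Q hs pp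
  set M : ℕ := ∏ q ∈ Q, q with hM
  have hM0 : 0 < M := Finset.prod_pos fun q hq => (hQ q hq).pos
  have key : ∀ t : ℕ, (k₀ + t * M) ∈ {k : ℕ | ∀ q ∈ Q, ∀ i : Fin (l + 1),
      ¬ (q : ℤ) ∣ (c q : ℤ) ^ n + (k : ℤ) * p * (c q) + a + d i} := by
    intro t q hq i hdvd
    haveI : Fact q.Prime := ⟨hQ q hq⟩
    have hC : (c q : ZMod q) ≠ 0 := by
      rw [Ne, ZMod.natCast_eq_zero_iff]
      intro h
      have h1 := (hc q hq).1
      have h2 := (hc q hq).2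
      have := Nat.le_of_dvd (by omega) h
      omega
    have hP : (p : ZMod q) ≠ 0 := by
      rw [Ne, ZMod.natCast_eq_zero_iff]
      exact hp q hq
    have hPC : (p : ZMod q) * (c q : ZMod q) ≠ 0 := mul_ne_zero hP hC
    -- the value of k₀ mod q
    have hkq : ((k₀ : ℕ) : ZMod q) = ((p : ZMod q) * (c q : ZMod q))⁻¹ *
        (-(e q (hQ q hq)) - (c q : ZMod q) ^ n - (a : ZMod q)) := by
      have := (ZMod.natCast_eq_natCast_iff _ _ _).2 (hk₀ q hq)
      rw [this, hw]
      simp only [hq, dif_pos]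
      rw [ZMod.natCast_val, ZMod.cast_id]
    have hMq : ((M : ℕ) : ZMod q) = 0 := by
      rw [ZMod.natCast_eq_zero_iff]
      exact Finset.dvd_prod_of_mem _ hq
    have h0 : (((c q : ℤ) ^ n + ((k₀ + t * M : ℕ) : ℤ) * p * (c q) + a + d i : ℤ) : ZMod q) = 0 := by
      rw [ZMod.intCast_zmod_eq_zero_iff_dvd]
      exact hdvd
    push_cast at h0
    rw [hMq, mul_zero, add_zero, hkq] at h0
    have hsimp : ((p : ZMod q) * (c q : ZMod q))⁻¹ *
        (-(e q (hQ q hq)) - (c q : ZMod q) ^ n - (a : ZMod q)) * (p : ZMod q) * (c q : ZMod q)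
        = -(e q (hQ q hq)) - (c q : ZMod q) ^ n - (a : ZMod q) := by
      field_simp
    rw [hsimp] at h0
    have : e q (hQ q hq) = ((d i : ℕ) : ZMod q) := by linear_combination -h0
    exact he q (hQ q hq) i this
  exact Set.infinite_of_injective_forall_mem (f := fun t : ℕ => k₀ + t * M)
    (fun t₁ t₂ h => Nat.eq_of_mul_eq_mul_right hM0 (Nat.add_left_cancel h)) key
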